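/- Let G be a finite simple connected graph with edge set E and let a ∈ ℝ^E with a ≠ 0. The homogeneous inequality a^T x ≤ 0 is facet-defining for BOND(G) if and only if it is facet-defining for CUT(G). -/

import Mathlib

open Finset

namespace BondPolytope

variable {V : Type*}

/-- The cut `δ(S)`: edges of `G` with exactly one endpoint in `S`. -/
def cut (G : SimpleGraph V) (S : Set V) : Set (Sym2 V) :=
  {e | e ∈ G.edgeSet ∧ ∃ u w, e = s(u, w) ∧ u ∈ S ∧ w ∉ S}

/-- A set of edges is a cut of `G`. -/
def IsCut (G : SimpleGraph V) (D : Set (Sym2 V)) : Prop :=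
  ∃ S : Set V, D = cut G S

/-- A set of edges is a bond of `G`: it is a cut `δ(S)` such that both sides induce
connected (possibly empty) subgraphs. -/
def IsBond (G : SimpleGraph V) (D : Set (Sym2 V)) : Prop :=
  ∃ S : Set V, D = cut G S ∧ (G.induce S).Preconnected ∧ (G.induce Sᶜ).Preconnected

open Classical in
/-- The indicator vector `x^δ ∈ ℝ^E` of a set `δ` of edges. -/
noncomputable def indVec (G : SimpleGraph V) (D : Set (Sym2 V)) : ↥G.edgeSet → ℝ :=
  fun e => if (e : Sym2 V) ∈ D then 1 else 0

/-- The bond polytope `BOND(G) ⊆ ℝ^E`. -/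
noncomputable def bondPolytope (G : SimpleGraph V) : Set (↥G.edgeSet → ℝ) :=
  convexHull ℝ {x | ∃ D, IsBond G D ∧ x = indVec G D}

/-- The cut polytope `CUT(G) ⊆ ℝ^E`. -/
noncomputable def cutPolytope (G : SimpleGraph V) : Set (↥G.edgeSet → ℝ) :=
  convexHull ℝ {x | ∃ D, IsCut G D ∧ x = indVec G D}

/-- `a^T x`. -/
noncomputable def dot {ι : Type*} [Fintype ι] (a x : ι → ℝ) : ℝ := ∑ i, a i * x i

/-- Affine dimension of a set of points. -/
noncomputable def affDim {W : Type*} [AddCommGroup W] [Module ℝ W] (s : Set W) : ℕ :=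
  Module.finrank ℝ ↥(vectorSpan ℝ s)

/-- `a^T x ≤ b` is facet-defining for `P`. -/
def IsFacet {ι : Type*} [Fintype ι] (P : Set (ι → ℝ)) (a : ι → ℝ) (b : ℝ) : Prop :=
  a ≠ 0 ∧ (∀ x ∈ P, dot a x ≤ b) ∧ {x ∈ P | dot a x = b}.Nonempty ∧
    affDim {x ∈ P | dot a x = b} + 1 = affDim P


section Aux

variable (G : SimpleGraph V)

lemma mem_cut {x y : V} {S : Set V} :
    s(x, y) ∈ cut G S ↔ G.Adj x y ∧ ((x ∈ S ∧ y ∉ S) ∨ (y ∈ S ∧ x ∉ S)) := by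
  constructor
  · rintro ⟨he, u, w, huw, hu, hw⟩
    refine ⟨(G.mem_edgeSet).mp he, ?_⟩
    rcases Sym2.eq_iff.mp huw with ⟨rfl, rfl⟩ | ⟨rfl, rfl⟩
    · exact Or.inl ⟨hu, hw⟩
    · exact Or.inr ⟨hu, hw⟩
  · rintro ⟨hadj, ⟨hx, hy⟩ | ⟨hy, hx⟩⟩
    · exact ⟨(G.mem_edgeSet).mpr hadj, x, y, rfl, hx, hy⟩
    · exact ⟨(G.mem_edgeSet).mpr hadj, y, x, Sym2.eq_swap, hy, hx⟩

lemma cut_compl (S : Set V) : cut G Sᶜ = cut G S := by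
  ext e
  induction e using Sym2.ind with
  | _ x y =>
    rw [mem_cut, mem_cut]
    simp only [Set.mem_compl_iff, not_not]
    tauto

lemma cut_empty : cut G (∅ : Set V) = ∅ := by
  ext e
  induction e using Sym2.ind with
  | _ x y => simp [mem_cut]

lemma walk_cross {S : Set V} : ∀ {x y : V}, G.Walk x y → x ∈ S → y ∉ S →
    (cut G S).Nonempty := by
  intro x y p
  induction p with
  | nil => intro h h'; exact absurd h h'
  | @cons u v w h p ih =>
    intro hu hw
    by_cases hv : v ∈ S
    · exact ih hv hw
    · exact ⟨s(u, v), (mem_cut G).mpr ⟨h, Or.inl ⟨hu, hv⟩⟩⟩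

lemma cut_nonempty (hG : G.Connected) {S : Set V} (h1 : S.Nonempty)
    (h2 : Sᶜ.Nonempty) : (cut G S).Nonempty := by
  obtain ⟨x, hx⟩ := h1
  obtain ⟨y, hy⟩ := h2
  exact (hG.preconnected x y).elim fun p => walk_cross G p hx hy

lemma split (hG : G.Connected) {T : Set V} (hT : ¬(G.induce T).Preconnected) :
    ∃ C : Set V, cut G C ⊆ cut G T ∧ cut G (T \ C) ⊆ cut G T ∧
      Disjoint (cut G C) (cut G (T \ C)) ∧ cut G C ∪ cut G (T \ C) = cut G T ∧
      (cut G C).Nonempty ∧ (cut G (T \ C)).Nonempty := by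
  rw [SimpleGraph.Preconnected] at hT
  push_neg at hT
  obtain ⟨u, v, huv⟩ := hT
  set C : Set V := {w | ∃ h : w ∈ T, (G.induce T).Reachable u ⟨w, h⟩} with hCdef
  have hCT : C ⊆ T := fun w hw => hw.1
  have huC : (u : V) ∈ C := ⟨u.2, by exact SimpleGraph.Reachable.refl _⟩
  have hvT : (v : V) ∈ T := v.2
  have hvC : (v : V) ∉ C := by
    rintro ⟨h, hr⟩
    exact huv (by convert hr)
  have hclosed : ∀ {x y : V}, x ∈ C → y ∈ T → G.Adj x y → y ∈ C := by
    rintro x y ⟨hxT, hr⟩ hyT hadj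
    refine ⟨hyT, hr.trans (SimpleGraph.Adj.reachable ?_)⟩
    exact hadj
  have hs1 : cut G C ⊆ cut G T := by
    intro e
    induction e using Sym2.ind with
    | _ x y =>
      rw [mem_cut, mem_cut]
      rintro ⟨hadj, ⟨hx, hy⟩ | ⟨hy, hx⟩⟩
      · have hyT : y ∉ T := fun h => hy (hclosed hx h hadj)
        exact ⟨hadj, Or.inl ⟨hCT hx, hyT⟩⟩
      · have hxT : x ∉ T := fun h => hx (hclosed hy h hadj.symm)
        exact ⟨hadj, Or.inr ⟨hCT hy, hxT⟩⟩
  have hs2 : cut G (T \ C) ⊆ cut G T := by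
    intro e
    induction e using Sym2.ind with
    | _ x y =>
      rw [mem_cut, mem_cut]
      rintro ⟨hadj, ⟨hx, hy⟩ | ⟨hy, hx⟩⟩
      · refine ⟨hadj, Or.inl ⟨hx.1, fun hyT => ?_⟩⟩
        have hyC : y ∈ C := by
          by_contra hyC
          exact hy ⟨hyT, hyC⟩
        exact hx.2 (hclosed hyC hx.1 hadj.symm)
      · refine ⟨hadj, Or.inr ⟨hy.1, fun hxT => ?_⟩⟩
        have hxC : x ∈ C := by
          by_contra hxC
          exact hx ⟨hxT, hxC⟩
        exact hy.2 (hclosed hxC hy.1 hadj)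
  have hdisj : Disjoint (cut G C) (cut G (T \ C)) := by
    rw [Set.disjoint_left]
    intro e he1 he2
    induction e using Sym2.ind with
    | _ x y =>
      rw [mem_cut] at he1 he2
      obtain ⟨hadj, hc1⟩ := he1
      obtain ⟨-, hc2⟩ := he2
      have hx' : x ∈ C → x ∉ T \ C := fun h h' => h'.2 h
      have hy' : y ∈ C → y ∉ T \ C := fun h h' => h'.2 h
      rcases hc1 with ⟨hx, hy⟩ | ⟨hy, hx⟩ <;>
        rcases hc2 with ⟨hx2, hy2⟩ | ⟨hy2, hx2⟩
      · exact (hx' hx) hx2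
      · exact hy (hclosed hx hy2.1 hadj)
      · exact hx (hclosed hy hx2.1 hadj.symm)
      · exact (hy' hy) hy2
  have hunion : cut G C ∪ cut G (T \ C) = cut G T := by
    refine Set.Subset.antisymm (Set.union_subset hs1 hs2) ?_
    intro e
    induction e using Sym2.ind with
    | _ x y =>
      rw [Set.mem_union, mem_cut, mem_cut, mem_cut]
      rintro ⟨hadj, ⟨hx, hy⟩ | ⟨hy, hx⟩⟩
      · by_cases hxC : x ∈ C
        · exact Or.inl ⟨hadj, Or.inl ⟨hxC, fun h => hy (hCT h)⟩⟩
        · exact Or.inr ⟨hadj, Or.inl ⟨⟨hx, hxC⟩, fun h => hy h.1⟩⟩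
      · by_cases hyC : y ∈ C
        · exact Or.inl ⟨hadj, Or.inr ⟨hyC, fun h => hx (hCT h)⟩⟩
        · exact Or.inr ⟨hadj, Or.inr ⟨⟨hy, hyC⟩, fun h => hx h.1⟩⟩
  refine ⟨C, hs1, hs2, hdisj, hunion, ?_, ?_⟩
  · exact cut_nonempty G hG ⟨u, huC⟩ ⟨v, hvC⟩
  · refine cut_nonempty G hG ⟨v, hvT, hvC⟩ ⟨u, ?_⟩
    intro h
    exact h.2 huC

end Aux


section Aux2

variable (G : SimpleGraph V)

lemma indVec_empty : indVec G (∅ : Set (Sym2 V)) = 0 := by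
  funext e
  simp [indVec]

lemma indVec_union (D₁ D₂ : Set (Sym2 V)) (hd : Disjoint D₁ D₂) :
    indVec G (D₁ ∪ D₂) = indVec G D₁ + indVec G D₂ := by
  classical
  funext e
  simp only [indVec, Pi.add_apply, Set.mem_union]
  by_cases h1 : (e : Sym2 V) ∈ D₁ <;> by_cases h2 : (e : Sym2 V) ∈ D₂ <;>
    simp [h1, h2]
  exact (Set.disjoint_left.mp hd h1 h2).elim

variable [Fintype V]

lemma decomp_aux (hG : G.Connected) :
    ∀ (k : ℕ) (S : Set V), (cut G S).ncard ≤ k →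
    ∃ L : List (Set (Sym2 V)), (∀ B ∈ L, IsBond G B) ∧
      indVec G (cut G S) = (L.map (indVec G)).sum := by
  intro k
  induction k with
  | zero =>
    intro S hS
    have h0 : cut G S = ∅ := by
      rw [← Set.ncard_eq_zero (Set.toFinite _)]
      omega
    exact ⟨[], by simp, by simp [h0, indVec_empty]⟩
  | succ k ih =>
    intro S hS
    by_cases h1 : (G.induce S).Preconnected ∧ (G.induce Sᶜ).Preconnected
    · refine ⟨[cut G S], ?_, by simp⟩
      intro B hB
      rw [List.mem_singleton] at hB
      subst hB
      exact ⟨S, rfl, h1.1, h1.2⟩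
    · have key : ∀ T : Set V, cut G T = cut G S → ¬(G.induce T).Preconnected →
          ∃ L : List (Set (Sym2 V)), (∀ B ∈ L, IsBond G B) ∧
            indVec G (cut G S) = (L.map (indVec G)).sum := by
        intro T hTS hT
        obtain ⟨C, hsub1, hsub2, hdisj, hunion, hne1, hne2⟩ := split G hG hT
        have hfin : (cut G T).Finite := Set.toFinite _
        have hcard : (cut G T).ncard ≤ k + 1 := by rw [hTS]; exact hS
        have hlt1 : (cut G C).ncard ≤ k := by
          have hss : cut G C ⊂ cut G T := by
            rw [Set.ssubset_def]
            refine ⟨hsub1, fun hsup => ?_⟩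
            obtain ⟨e, he⟩ := hne2
            exact Set.disjoint_left.mp hdisj (hsup (hsub2 he)) he
          have := Set.ncard_lt_ncard hss hfin
          omega
        have hlt2 : (cut G (T \ C)).ncard ≤ k := by
          have hss : cut G (T \ C) ⊂ cut G T := by
            rw [Set.ssubset_def]
            refine ⟨hsub2, fun hsup => ?_⟩
            obtain ⟨e, he⟩ := hne1
            exact Set.disjoint_left.mp hdisj he (hsup (hsub1 he))
          have := Set.ncard_lt_ncard hss hfin
          omega
        obtain ⟨L₁, hL₁, hI₁⟩ := ih C hlt1
        obtain ⟨L₂, hL₂, hI₂⟩ := ih (T \ C) hlt2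
        refine ⟨L₁ ++ L₂, ?_, ?_⟩
        · intro B hB
          rcases List.mem_append.mp hB with h | h
          · exact hL₁ B h
          · exact hL₂ B h
        · rw [← hTS, ← hunion, indVec_union G _ _ hdisj, hI₁, hI₂,
            List.map_append, List.sum_append]
      rcases not_and_or.mp h1 with h | h
      · exact key S rfl h
      · exact key Sᶜ (cut_compl G S) h

lemma decomp (hG : G.Connected) (S : Set V) :
    ∃ L : List (Set (Sym2 V)), (∀ B ∈ L, IsBond G B) ∧
      indVec G (cut G S) = (L.map (indVec G)).sum :=
  decomp_aux G hG (cut G S).ncard S le_rfl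

end Aux2

section Poly

variable {ι : Type*} [Fintype ι]

noncomputable def dotL (a : ι → ℝ) : (ι → ℝ) →ₗ[ℝ] ℝ where
  toFun := dot a
  map_add' x y := by simp [dot, mul_add, Finset.sum_add_distrib]
  map_smul' c x := by simp [dot, Finset.mul_sum, mul_left_comm]

lemma dot_zero (a : ι → ℝ) : dot a 0 = 0 := by simp [dot]

lemma dot_le_hull {a : ι → ℝ} {s : Set (ι → ℝ)} (h : ∀ x ∈ s, dot a x ≤ 0) :
    ∀ x ∈ convexHull ℝ s, dot a x ≤ 0 := fun _ hx =>
  convexHull_min h (convex_halfSpace_le (dotL a).isLinear 0) hx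

lemma dot_list_sum (a : ι → ℝ) (L : List (ι → ℝ)) :
    dot a L.sum = (L.map (dot a)).sum := by
  have := map_list_sum (dotL a) L
  exact this

lemma face_hull {a : ι → ℝ} {s : Set (ι → ℝ)} (h : ∀ x ∈ s, dot a x ≤ 0) :
    {x ∈ convexHull ℝ s | dot a x = 0} = convexHull ℝ {x ∈ s | dot a x = 0} := by
  apply Set.Subset.antisymm
  · rintro x ⟨hx, hx0⟩
    rw [_root_.convexHull_eq] at hx
    obtain ⟨κ, t, w, z, hw, hw1, hz, hx⟩ := hx
    classical
    have hcm : x = ∑ i ∈ t, w i • z i := by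
      rw [← hx, Finset.centerMass_eq_of_sum_1 _ _ hw1]
    have hdx : dot a x = ∑ i ∈ t, w i * dot a (z i) := by
      calc dot a x = dotL a (∑ i ∈ t, w i • z i) := by rw [hcm]; rfl
        _ = ∑ i ∈ t, dotL a (w i • z i) := map_sum (dotL a) _ t
        _ = ∑ i ∈ t, w i * dot a (z i) := Finset.sum_congr rfl fun i _ => by
              rw [map_smul, smul_eq_mul]; rfl
    have hle : ∀ i ∈ t, w i * dot a (z i) ≤ 0 := fun i hi =>
      mul_nonpos_iff.mpr (Or.inl ⟨hw i hi, h _ (hz i hi)⟩)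
    have hall : ∀ i ∈ t, w i * dot a (z i) = 0 :=
      (Finset.sum_eq_zero_iff_of_nonpos hle).mp (by rw [← hdx, hx0])
    set t' := t.filter (fun i => w i ≠ 0) with ht'
    have hmem : t'.centerMass w z ∈ convexHull ℝ {x ∈ s | dot a x = 0} := by
      refine Finset.centerMass_mem_convexHull t' (fun i hi => hw i (Finset.mem_of_mem_filter i hi)) ?_ ?_
      · rw [ht', Finset.sum_filter_ne_zero, hw1]; norm_num
      · intro i hi
        rw [ht', Finset.mem_filter] at hi
        refine ⟨hz i hi.1, ?_⟩
        rcases mul_eq_zero.mp (hall i hi.1) with h' | h'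
        · exact absurd h' hi.2
        · exact h'
    rwa [ht', Finset.centerMass_filter_ne_zero, hx] at hmem
  · intro x hx
    refine ⟨convexHull_mono (Set.sep_subset _ _) hx, le_antisymm ?_ ?_⟩
    · exact dot_le_hull (fun y hy => hy.2.le) x hx
    · exact convexHull_min (fun y (hy : _ ∧ _) => hy.2.ge)
        (convex_halfSpace_ge (dotL a).isLinear 0) hx

end Poly

section Span

variable {W : Type*} [AddCommGroup W] [Module ℝ W]

lemma vectorSpan_hull (s : Set W) : vectorSpan ℝ (convexHull ℝ s) = vectorSpan ℝ s := by
  rw [← direction_affineSpan, affineSpan_convexHull, direction_affineSpan]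

lemma vectorSpan_eq_span {s : Set W} (h0 : (0 : W) ∈ s) :
    vectorSpan ℝ s = Submodule.span ℝ s := by
  apply le_antisymm
  · rw [vectorSpan_def]
    apply Submodule.span_le.mpr
    rintro x hx
    rw [Set.mem_vsub] at hx
    obtain ⟨p, hp, q, hq, rfl⟩ := hx
    exact sub_mem (Submodule.subset_span hp) (Submodule.subset_span hq)
  · apply Submodule.span_le.mpr
    intro x hx
    have : x ∈ (s -ᵥ s : Set W) := Set.mem_vsub.mpr ⟨x, hx, 0, h0, by simp⟩
    rw [vectorSpan_def]
    exact Submodule.subset_span this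

end Span

section Final

variable (G : SimpleGraph V)

lemma isBond_empty (hG : G.Connected) : IsBond G (∅ : Set (Sym2 V)) := by
  refine ⟨∅, (cut_empty G).symm, ?_, ?_⟩
  · intro x
    exact absurd x.2 (Set.notMem_empty _)
  · rw [Set.compl_empty]
    intro x y
    have h := hG.preconnected x.1 y.1
    have h2 := h.map (G.induceUnivIso).symm.toHom
    convert h2 using 2 <;> exact Subtype.ext rfl

lemma list_sum_nonpos : ∀ {l : List ℝ}, (∀ x ∈ l, x ≤ 0) → l.sum ≤ 0 := by
  intro l
  induction l with
  | nil => simp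
  | cons a t ih =>
    intro h
    have ha := h a List.mem_cons_self
    have ht := ih fun x hx => h x (List.mem_cons_of_mem _ hx)
    simp only [List.sum_cons]
    linarith

lemma list_sum_zero : ∀ {l : List ℝ}, (∀ x ∈ l, x ≤ 0) → l.sum = 0 →
    ∀ x ∈ l, x = 0 := by
  intro l
  induction l with
  | nil => simp
  | cons a t ih =>
    intro h h0 x hx
    have ha := h a List.mem_cons_self
    have ht : ∀ y ∈ t, y ≤ 0 := fun y hy => h y (List.mem_cons_of_mem _ hy)
    have hts := list_sum_nonpos ht
    simp only [List.sum_cons] at h0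
    have ha0 : a = 0 := by linarith
    have ht0 : t.sum = 0 := by linarith
    rcases List.mem_cons.mp hx with rfl | hx
    · exact ha0
    · exact ih ht ht0 x hx

variable [Fintype V] [DecidableEq V] [DecidableRel G.Adj]

lemma span_eq (hG : G.Connected) (a : ↥G.edgeSet → ℝ)
    (hval : ∀ D, IsBond G D → dot a (indVec G D) ≤ 0) :
    Submodule.span ℝ {x ∈ {x | ∃ D, IsCut G D ∧ x = indVec G D} | dot a x = 0} =
      Submodule.span ℝ {x ∈ {x | ∃ D, IsBond G D ∧ x = indVec G D} | dot a x = 0} := by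
  apply le_antisymm
  · apply Submodule.span_le.mpr
    rintro x ⟨⟨D, ⟨S, rfl⟩, rfl⟩, hx0⟩
    obtain ⟨L, hL, hI⟩ := decomp G hG S
    rw [hI]
    have hdots : ∀ y ∈ L.map (dot a ∘ indVec G), y ≤ 0 := by
      intro y hy
      obtain ⟨B, hB, rfl⟩ := List.mem_map.mp hy
      exact hval B (hL B hB)
    have hsum0 : (L.map (dot a ∘ indVec G)).sum = 0 := by
      have : dot a ((L.map (indVec G)).sum) = 0 := by rw [← hI]; exact hx0
      rw [dot_list_sum, List.map_map] at this
      exact this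
    refine list_sum_mem ?_
    intro y hy
    obtain ⟨B, hB, rfl⟩ := List.mem_map.mp hy
    refine Submodule.subset_span ⟨⟨B, hL B hB, rfl⟩, ?_⟩
    exact list_sum_zero hdots hsum0 _ (List.mem_map.mpr ⟨B, hB, rfl⟩)
  · apply Submodule.span_mono
    rintro x ⟨⟨D, ⟨S, hD, _, _⟩, rfl⟩, hx0⟩
    exact ⟨⟨D, ⟨S, hD⟩, rfl⟩, hx0⟩

lemma span_eq2 (hG : G.Connected) :
    Submodule.span ℝ {x : ↥G.edgeSet → ℝ | ∃ D, IsCut G D ∧ x = indVec G D} =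
      Submodule.span ℝ {x | ∃ D, IsBond G D ∧ x = indVec G D} := by
  apply le_antisymm
  · apply Submodule.span_le.mpr
    rintro x ⟨D, ⟨S, rfl⟩, rfl⟩
    obtain ⟨L, hL, hI⟩ := decomp G hG S
    rw [hI]
    refine list_sum_mem ?_
    intro y hy
    obtain ⟨B, hB, rfl⟩ := List.mem_map.mp hy
    exact Submodule.subset_span ⟨B, hL B hB, rfl⟩
  · apply Submodule.span_mono
    rintro x ⟨D, ⟨S, hD, _, _⟩, rfl⟩
    exact ⟨D, ⟨S, hD⟩, rfl⟩

end Final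

theorem homogeneous_facet_bond_iff_cut {V : Type*} [Fintype V] [DecidableEq V]
    (G : SimpleGraph V) [DecidableRel G.Adj] (hG : G.Connected)
    (a : ↥G.edgeSet → ℝ) (ha : a ≠ 0) :
    IsFacet (bondPolytope G) a 0 ↔ IsFacet (cutPolytope G) a 0 := by
  set SB : Set (↥G.edgeSet → ℝ) := {x | ∃ D, IsBond G D ∧ x = indVec G D} with hSB
  set SC : Set (↥G.edgeSet → ℝ) := {x | ∃ D, IsCut G D ∧ x = indVec G D} with hSC
  have hBP : bondPolytope G = convexHull ℝ SB := rfl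
  have hCP : cutPolytope G = convexHull ℝ SC := rfl
  have h0B : (0 : ↥G.edgeSet → ℝ) ∈ SB := ⟨∅, isBond_empty G hG, (indVec_empty G).symm⟩
  have h0C : (0 : ↥G.edgeSet → ℝ) ∈ SC := ⟨∅, ⟨∅, (cut_empty G).symm⟩, (indVec_empty G).symm⟩
  have hsub : SB ⊆ SC := by
    rintro x ⟨D, ⟨S, hD, _, _⟩, rfl⟩
    exact ⟨D, ⟨S, hD⟩, rfl⟩
  -- the main transfer, assuming validity on bond generators
  have main : ∀ (hval : ∀ x ∈ SB, dot a x ≤ 0),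
      (∀ x ∈ SC, dot a x ≤ 0) ∧
      affDim {x ∈ bondPolytope G | dot a x = 0} = affDim {x ∈ cutPolytope G | dot a x = 0} ∧
      affDim (bondPolytope G) = affDim (cutPolytope G) := by
    intro hval
    have hvalD : ∀ D, IsBond G D → dot a (indVec G D) ≤ 0 := fun D hD =>
      hval _ ⟨D, hD, rfl⟩
    have hvalC : ∀ x ∈ SC, dot a x ≤ 0 := by
      rintro x ⟨D, ⟨S, rfl⟩, rfl⟩
      obtain ⟨L, hL, hI⟩ := decomp G hG S
      rw [hI, dot_list_sum, List.map_map]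
      refine list_sum_nonpos ?_
      intro y hy
      obtain ⟨B, hB, rfl⟩ := List.mem_map.mp hy
      exact hvalD B (hL B hB)
    refine ⟨hvalC, ?_, ?_⟩
    · have hzB : (0 : ↥G.edgeSet → ℝ) ∈ {x ∈ SB | dot a x = 0} := ⟨h0B, dot_zero a⟩
      have hzC : (0 : ↥G.edgeSet → ℝ) ∈ {x ∈ SC | dot a x = 0} := ⟨h0C, dot_zero a⟩
      rw [hBP, hCP, face_hull hval, face_hull hvalC]
      unfold affDim
      rw [vectorSpan_hull, vectorSpan_hull, vectorSpan_eq_span hzB,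
        vectorSpan_eq_span hzC, span_eq G hG a hvalD]
    · rw [hBP, hCP]
      unfold affDim
      rw [vectorSpan_hull, vectorSpan_hull, vectorSpan_eq_span h0B,
        vectorSpan_eq_span h0C, span_eq2 G hG]
  constructor
  · rintro ⟨-, hval, -, hdim⟩
    have hvalB : ∀ x ∈ SB, dot a x ≤ 0 := fun x hx =>
      hval x (subset_convexHull ℝ SB hx)
    obtain ⟨hvalC, hfd, hpd⟩ := main hvalB
    refine ⟨ha, fun x hx => dot_le_hull hvalC x hx, ?_, ?_⟩
    · exact ⟨0, subset_convexHull ℝ SC h0C, dot_zero a⟩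
    · rw [← hfd, ← hpd]; exact hdim
  · rintro ⟨-, hval, -, hdim⟩
    have hvalB : ∀ x ∈ SB, dot a x ≤ 0 := fun x hx =>
      hval x (subset_convexHull ℝ SC (hsub hx))
    obtain ⟨hvalC, hfd, hpd⟩ := main hvalB
    refine ⟨ha, fun x hx => dot_le_hull hvalB x hx, ?_, ?_⟩
    · exact ⟨0, subset_convexHull ℝ SB h0B, dot_zero a⟩
    · rw [hfd, hpd]; exact hdim

end BondPolytope
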